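/- Let 1 ≤ k ≤ n be integers with n ≥ 2k, and let 0 ≤ i ≤ j ≤ k. Then the integer Σ_{v=0}^{i} (−1)^{i+v} C(i,v) · (k−v) · C(n−k−j+v, 1−j+v) equals (k−i)(n−k−i) − i if i = j; equals k−i if i = j−1; and equals 0 if i < j−1. (Equivalently, f_i(j; n, k, k, k−1) takes these values.) -/
import Mathlib


/-- Integer binomial coefficient with the convention `C x y = 0` unless `0 ≤ y ≤ x`. -/
def C (x y : ℤ) : ℤ :=
  if 0 ≤ y ∧ y ≤ x then (x.toNat).choose y.toNat else 0

lemma C_neg (x y : ℤ) (h : y < 0) : C x y = 0 := by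
  rw [C, if_neg]; exact fun h' => absurd h'.1 (by omega)

lemma C_zero (x : ℤ) (h : 0 ≤ x) : C x 0 = 1 := by
  rw [C, if_pos ⟨le_refl 0, h⟩]; simp

lemma C_one (x : ℤ) (h : 1 ≤ x) : C x 1 = x := by
  rw [C, if_pos ⟨by norm_num, h⟩]
  simp [Nat.choose_one_right, Int.toNat_of_nonneg (by omega : (0:ℤ) ≤ x)]

/-- Evaluation of `f_i(j; n, k, k, k−1)`:
`Σ_{v=0}^{i} (−1)^{i+v} C(i,v)·(k−v)·C(n−k−j+v, 1−j+v)` equals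
`(k−i)(n−k−i) − i` when `i = j`, equals `k−i` when `j = i+1`, and `0` when `i < j−1`. -/
theorem statement13 (n k i j : ℕ) (hk : 1 ≤ k) (hkn : k ≤ n) (h2k : 2 * k ≤ n)
    (hij : i ≤ j) (hjk : j ≤ k) :
    (∑ v ∈ Finset.range (i + 1),
        (-1 : ℤ) ^ (i + v) * (i.choose v) * ((k : ℤ) - v) *
          C ((n : ℤ) - k - j + v) (1 - (j : ℤ) + v))
      = if i = j then ((k : ℤ) - i) * ((n : ℤ) - k - i) - i
        else if j = i + 1 then (k : ℤ) - i
        else 0 := by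
  have hnk : (1:ℤ) ≤ (n:ℤ) - k := by push_cast; omega
  rcases eq_or_lt_of_le hij with rfl | hlt
  · -- i = j
    simp only [if_pos rfl]
    rcases i with _ | m
    · norm_num [Finset.sum_range_one]
      rw [C_one _ hnk]; exact Or.inl rfl
    · rw [Finset.sum_range_succ, Finset.sum_range_succ, Finset.sum_eq_zero]
      · have e1 : (1 - ((m+1:ℕ):ℤ) + (m:ℕ)) = 0 := by push_cast; ring
        have e2 : ((n : ℤ) - k - ((m+1:ℕ):ℤ) + (m:ℕ)) = (n:ℤ) - k - 1 := by push_cast; ring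
        have e3 : (1 - ((m+1:ℕ):ℤ) + ((m+1:ℕ):ℤ)) = 1 := by ring
        have e4 : ((n : ℤ) - k - ((m+1:ℕ):ℤ) + ((m+1:ℕ):ℤ)) = (n:ℤ) - k := by ring
        rw [e1, e2, e3, e4, C_zero _ (by omega), C_one _ hnk]
        have s1 : ((-1:ℤ)) ^ ((m+1) + m) = -1 := Odd.neg_one_pow ⟨m, by ring⟩
        have s2 : ((-1:ℤ)) ^ ((m+1) + (m+1)) = 1 := Even.neg_one_pow ⟨m+1, by ring⟩
        rw [s1, s2, Nat.choose_succ_self_right, Nat.choose_self]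
        push_cast; ring
      · intro v hv
        have hvm : v < m := Finset.mem_range.mp hv
        have : (1 - ((m+1:ℕ):ℤ) + v) < 0 := by push_cast; omega
        rw [C_neg _ _ this, mul_zero]
  · rcases eq_or_lt_of_le (Nat.succ_le_of_lt hlt) with hj1 | hj2
    · -- j = i + 1
      rw [if_neg (by omega), if_pos hj1.symm]
      rw [Finset.sum_range_succ, Finset.sum_eq_zero]
      · have e1 : (1 - (j:ℤ) + (i:ℕ)) = 0 := by push_cast; omega
        have e2 : ((n : ℤ) - k - j + (i:ℕ)) = (n:ℤ) - k - 1 := by push_cast; omega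
        rw [e1, e2, C_zero _ (by omega)]
        have s2 : ((-1:ℤ)) ^ (i + i) = 1 := Even.neg_one_pow ⟨i, rfl⟩
        rw [s2, Nat.choose_self]; push_cast; ring
      · intro v hv
        have hvm : v < i := Finset.mem_range.mp hv
        have : (1 - (j:ℤ) + v) < 0 := by push_cast; omega
        rw [C_neg _ _ this, mul_zero]
    · -- i + 1 < j
      rw [if_neg (by omega), if_neg (by omega)]
      rw [Finset.sum_eq_zero]
      intro v hv
      have hvm : v < i + 1 := Finset.mem_range.mp hv
      have : (1 - (j:ℤ) + v) < 0 := by push_cast; omega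
      rw [C_neg _ _ this, mul_zero]
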